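/- arXiv:1601.04825 — 3 statements merged into one kernel-verified Lean document; each statement's English description precedes it below -/
import Mathlib

section
/- Let d ≥ 1, ε ∈ ℝ, and let S : ℝ^d → ℝ, A : ℝ^d → ℂ be smooth (C^∞). With the operators N₁(S,A) = ( −|∇S|²/2 , −∇S·∇A − (A/2)ΔS + (i/2)ΔA ) and N₂(S,A) = ( 0 , (i(ε−1)/2)ΔA ), and their Gateaux derivatives DN₁(S,A)·(S₀,A₀) = ( −∇S·∇S₀ , −∇S·∇A₀ − (A₀/2)ΔS − ∇S₀·∇A − (A/2)ΔS₀ + (i/2)ΔA₀ ) and DN₂(S,A)·(S₀,A₀) = ( 0 , (i(ε−1)/2)ΔA₀ ), the commutator [N₁,N₂](S,A) := DN₁(S,A)·N₂(S,A) − DN₂(S,A)·N₁(S,A) equals, at every point, ( 0 , (i(ε−1)/2) ( ∇ΔS·∇A + (A/2)Δ²S + 2 Σ_{k=1}^d ∇(∂_k S)·∇(∂_k A) + ∇A·∇ΔS ) ). -/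
noncomputable section

open Real Complex Finset

/-- Partial derivative in the `k`-th coordinate direction of a function on `ℝ^d`. -/
def pds {d : ℕ} {E : Type*} [NormedAddCommGroup E] [NormedSpace ℝ E]
    (f : (Fin d → ℝ) → E) (k : Fin d) (x : Fin d → ℝ) : E :=
  fderiv ℝ f x (Pi.single k 1)

/-- Laplacian `Δ = ∑ₖ ∂²_{x_k}` of a function on `ℝ^d`. -/
def laps {d : ℕ} {E : Type*} [NormedAddCommGroup E] [NormedSpace ℝ E]
    (f : (Fin d → ℝ) → E) (x : Fin d → ℝ) : E :=
  ∑ k : Fin d, pds (pds f k) k x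

/-- First (phase) component of the operator `N₁(S,A) = (−|∇S|²/2, −∇S·∇A − (A/2)ΔS + (i/2)ΔA)`. -/
def opN1S {d : ℕ} (S : (Fin d → ℝ) → ℝ) : (Fin d → ℝ) → ℝ :=
  fun x => -(∑ k : Fin d, (pds S k x) ^ 2) / 2

/-- Second (amplitude) component of the operator `N₁`. -/
def opN1A {d : ℕ} (S : (Fin d → ℝ) → ℝ) (A : (Fin d → ℝ) → ℂ) : (Fin d → ℝ) → ℂ :=
  fun x => -(∑ k : Fin d, ((pds S k x : ℝ) : ℂ) * pds A k x)
    - A x / 2 * ((laps S x : ℝ) : ℂ) + Complex.I / 2 * laps A x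

/-- First component of the Gateaux derivative `DN₁(S,A)·(S₀,A₀)`. -/
def opDN1S {d : ℕ} (S S₀ : (Fin d → ℝ) → ℝ) : (Fin d → ℝ) → ℝ :=
  fun x => -∑ k : Fin d, pds S k x * pds S₀ k x

/-- Second component of the Gateaux derivative `DN₁(S,A)·(S₀,A₀)`. -/
def opDN1A {d : ℕ} (S : (Fin d → ℝ) → ℝ) (A : (Fin d → ℝ) → ℂ)
    (S₀ : (Fin d → ℝ) → ℝ) (A₀ : (Fin d → ℝ) → ℂ) : (Fin d → ℝ) → ℂ :=
  fun x => -(∑ k : Fin d, ((pds S k x : ℝ) : ℂ) * pds A₀ k x)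
    - A₀ x / 2 * ((laps S x : ℝ) : ℂ)
    - (∑ k : Fin d, ((pds S₀ k x : ℝ) : ℂ) * pds A k x)
    - A x / 2 * ((laps S₀ x : ℝ) : ℂ)
    + Complex.I / 2 * laps A₀ x

/-- Second (amplitude) component of the operator `N₂(S,A) = (0, (i(ε−1)/2)ΔA)`;
its first component is `0`. -/
def opN2A {d : ℕ} (ε : ℝ) (A : (Fin d → ℝ) → ℂ) : (Fin d → ℝ) → ℂ :=
  fun x => Complex.I * ((ε : ℂ) - 1) / 2 * laps A x

/-- Second component of the Gateaux derivative `DN₂(S,A)·(S₀,A₀) = (0, (i(ε−1)/2)ΔA₀)`;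
its first component is `0`. -/
def opDN2A {d : ℕ} (ε : ℝ) (A₀ : (Fin d → ℝ) → ℂ) : (Fin d → ℝ) → ℂ :=
  fun x => Complex.I * ((ε : ℂ) - 1) / 2 * laps A₀ x

section helpers

variable {d : ℕ} {E : Type*} [NormedAddCommGroup E] [NormedSpace ℝ E]

lemma top_add_one_le : ((⊤:ℕ∞) : WithTop ℕ∞) + 1 ≤ ((⊤:ℕ∞) : WithTop ℕ∞) := by
  norm_cast

lemma contDiff_fderiv {f : (Fin d → ℝ) → E} (hf : ContDiff ℝ (⊤:ℕ∞) f) :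
    ContDiff ℝ (⊤:ℕ∞) (fun x => fderiv ℝ f x) :=
  hf.fderiv_right (m := ((⊤:ℕ∞) : WithTop ℕ∞)) top_add_one_le

lemma contDiff_pds {f : (Fin d → ℝ) → E} (hf : ContDiff ℝ (⊤:ℕ∞) f) (k : Fin d) :
    ContDiff ℝ (⊤:ℕ∞) (pds f k) :=
  (contDiff_fderiv hf).clm_apply contDiff_const

lemma diffOf {f : (Fin d → ℝ) → E} (hf : ContDiff ℝ (⊤:ℕ∞) f) : Differentiable ℝ f :=
  hf.differentiable (by norm_cast)

lemma contDiff_laps {f : (Fin d → ℝ) → E} (hf : ContDiff ℝ (⊤:ℕ∞) f) :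
    ContDiff ℝ (⊤:ℕ∞) (laps f) := by
  have : (laps f) = fun x => ∑ k : Fin d, pds (pds f k) k x := rfl
  rw [this]
  exact ContDiff.sum fun k _ => contDiff_pds (contDiff_pds hf k) k

lemma contDiff_ofReal {f : (Fin d → ℝ) → ℝ} (hf : ContDiff ℝ (⊤:ℕ∞) f) :
    ContDiff ℝ (⊤:ℕ∞) (fun y => ((f y : ℝ) : ℂ)) :=
  Complex.ofRealCLM.contDiff.comp hf

lemma contDiff_prodRC {f : (Fin d → ℝ) → ℝ} {g : (Fin d → ℝ) → ℂ}
    (hf : ContDiff ℝ (⊤:ℕ∞) f) (hg : ContDiff ℝ (⊤:ℕ∞) g) :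
    ContDiff ℝ (⊤:ℕ∞) (fun y => ((f y : ℝ) : ℂ) * g y) :=
  (contDiff_ofReal hf).mul hg

lemma pds_add {f g : (Fin d → ℝ) → E} {x : Fin d → ℝ}
    (hf : DifferentiableAt ℝ f x) (hg : DifferentiableAt ℝ g x) (k : Fin d) :
    pds (fun y => f y + g y) k x = pds f k x + pds g k x := by
  simp [pds, fderiv_fun_add hf hg]

lemma pds_neg {f : (Fin d → ℝ) → E} {x : Fin d → ℝ} (k : Fin d) :
    pds (fun y => -(f y)) k x = -pds f k x := by
  simp [pds, fderiv_neg]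

lemma pds_sub {f g : (Fin d → ℝ) → E} {x : Fin d → ℝ}
    (hf : DifferentiableAt ℝ f x) (hg : DifferentiableAt ℝ g x) (k : Fin d) :
    pds (fun y => f y - g y) k x = pds f k x - pds g k x := by
  simp [pds, fderiv_fun_sub hf hg]

lemma pds_sum {ι : Type*} {s : Finset ι} {f : ι → (Fin d → ℝ) → E} {x : Fin d → ℝ}
    (hf : ∀ i ∈ s, DifferentiableAt ℝ (f i) x) (k : Fin d) :
    pds (fun y => ∑ i ∈ s, f i y) k x = ∑ i ∈ s, pds (f i) k x := by
  simp [pds, fderiv_fun_sum hf]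

lemma pds_const_mul {f : (Fin d → ℝ) → ℂ} {x : Fin d → ℝ}
    (hf : DifferentiableAt ℝ f x) (c : ℂ) (k : Fin d) :
    pds (fun y => c * f y) k x = c * pds f k x := by
  simp [pds, fderiv_const_mul hf c]

lemma pds_smul {f : (Fin d → ℝ) → ℝ} {g : (Fin d → ℝ) → E} {x : Fin d → ℝ}
    (hf : DifferentiableAt ℝ f x) (hg : DifferentiableAt ℝ g x) (k : Fin d) :
    pds (fun y => f y • g y) k x = f x • pds g k x + pds f k x • g x := by
  simp [pds, fderiv_fun_smul hf hg]

lemma pds_prodRC {f : (Fin d → ℝ) → ℝ} {g : (Fin d → ℝ) → ℂ} {x : Fin d → ℝ}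
    (hf : DifferentiableAt ℝ f x) (hg : DifferentiableAt ℝ g x) (k : Fin d) :
    pds (fun y => ((f y : ℝ) : ℂ) * g y) k x
      = ((f x : ℝ) : ℂ) * pds g k x + ((pds f k x : ℝ) : ℂ) * g x := by
  have : (fun y => ((f y : ℝ) : ℂ) * g y) = fun y => f y • g y := by
    funext y; rw [Complex.real_smul]
  rw [this, pds_smul hf hg]
  simp [Complex.real_smul]

lemma pds_comm {f : (Fin d → ℝ) → E} (hf : ContDiff ℝ (⊤:ℕ∞) f) (j k : Fin d) (x : Fin d → ℝ) :
    pds (pds f j) k x = pds (pds f k) j x := by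
  have hd1 : DifferentiableAt ℝ (fun y => fderiv ℝ f y) x :=
    ((contDiff_fderiv hf).differentiable (by norm_cast)).differentiableAt
  have h1 : ∀ v : Fin d → ℝ, ∀ w : Fin d → ℝ,
      fderiv ℝ (fun y => fderiv ℝ f y v) x w = fderiv ℝ (fderiv ℝ f) x w v := by
    intro v w
    rw [fderiv_clm_apply hd1 (differentiableAt_const v)]
    simp
  have hsym : IsSymmSndFDerivAt ℝ f x :=
    (hf.contDiffAt).isSymmSndFDerivAt (by simp only [minSmoothness_of_isRCLikeNormedField]; norm_cast)
  have e : ∀ v : Fin d, pds f v = fun y => fderiv ℝ f y (Pi.single v 1) := fun v => rfl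
  simp only [pds, e]
  rw [h1, h1, hsym]

lemma laps_neg {f : (Fin d → ℝ) → E} (x : Fin d → ℝ) :
    laps (fun y => -(f y)) x = -laps f x := by
  have e : ∀ k : Fin d, pds (fun y => -(f y)) k = fun y => -(pds f k y) := by
    intro k; funext y; exact pds_neg k
  simp only [laps, e]
  simp [pds_neg]

lemma laps_add {f g : (Fin d → ℝ) → E}
    (hf : ContDiff ℝ (⊤:ℕ∞) f) (hg : ContDiff ℝ (⊤:ℕ∞) g) (x : Fin d → ℝ) :
    laps (fun y => f y + g y) x = laps f x + laps g x := by
  have e : ∀ k : Fin d, pds (fun y => f y + g y) k = fun y => pds f k y + pds g k y := by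
    intro k; funext y; exact pds_add (diffOf hf y) (diffOf hg y) k
  simp only [laps, e]
  rw [← Finset.sum_add_distrib]
  exact Finset.sum_congr rfl fun k _ =>
    pds_add (diffOf (contDiff_pds hf k) x) (diffOf (contDiff_pds hg k) x) k

lemma laps_sub {f g : (Fin d → ℝ) → E}
    (hf : ContDiff ℝ (⊤:ℕ∞) f) (hg : ContDiff ℝ (⊤:ℕ∞) g) (x : Fin d → ℝ) :
    laps (fun y => f y - g y) x = laps f x - laps g x := by
  have e : ∀ k : Fin d, pds (fun y => f y - g y) k = fun y => pds f k y - pds g k y := by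
    intro k; funext y; exact pds_sub (diffOf hf y) (diffOf hg y) k
  simp only [laps, e]
  rw [← Finset.sum_sub_distrib]
  exact Finset.sum_congr rfl fun k _ =>
    pds_sub (diffOf (contDiff_pds hf k) x) (diffOf (contDiff_pds hg k) x) k

lemma laps_sum {ι : Type*} {s : Finset ι} {f : ι → (Fin d → ℝ) → E}
    (hf : ∀ i ∈ s, ContDiff ℝ (⊤:ℕ∞) (f i)) (x : Fin d → ℝ) :
    laps (fun y => ∑ i ∈ s, f i y) x = ∑ i ∈ s, laps (f i) x := by
  have e : ∀ k : Fin d, pds (fun y => ∑ i ∈ s, f i y) k = fun y => ∑ i ∈ s, pds (f i) k y := by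
    intro k; funext y; exact pds_sum (fun i hi => diffOf (hf i hi) y) k
  simp only [laps, e]
  rw [Finset.sum_comm]
  exact Finset.sum_congr rfl fun k _ =>
    pds_sum (fun i hi => diffOf (contDiff_pds (hf i hi) k) x) k

lemma laps_const_mul {f : (Fin d → ℝ) → ℂ}
    (hf : ContDiff ℝ (⊤:ℕ∞) f) (c : ℂ) (x : Fin d → ℝ) :
    laps (fun y => c * f y) x = c * laps f x := by
  have e : ∀ k : Fin d, pds (fun y => c * f y) k = fun y => c * pds f k y := by
    intro k; funext y; exact pds_const_mul (diffOf hf y) c k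
  simp only [laps, e]
  rw [Finset.mul_sum]
  exact Finset.sum_congr rfl fun k _ => pds_const_mul (diffOf (contDiff_pds hf k) x) c k

lemma laps_prodRC {f : (Fin d → ℝ) → ℝ} {g : (Fin d → ℝ) → ℂ}
    (hf : ContDiff ℝ (⊤:ℕ∞) f) (hg : ContDiff ℝ (⊤:ℕ∞) g) (x : Fin d → ℝ) :
    laps (fun y => ((f y : ℝ) : ℂ) * g y) x
      = ((laps f x : ℝ) : ℂ) * g x
        + 2 * ∑ j : Fin d, ((pds f j x : ℝ) : ℂ) * pds g j x
        + ((f x : ℝ) : ℂ) * laps g x := by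
  have e : ∀ k : Fin d, pds (fun y => ((f y : ℝ) : ℂ) * g y) k
      = fun y => ((f y : ℝ) : ℂ) * pds g k y + ((pds f k y : ℝ) : ℂ) * g y := by
    intro k; funext y; exact pds_prodRC (diffOf hf y) (diffOf hg y) k
  simp only [laps, e]
  have e2 : ∀ k : Fin d,
      pds (fun y => ((f y : ℝ) : ℂ) * pds g k y + ((pds f k y : ℝ) : ℂ) * g y) k x
        = (((f x : ℝ) : ℂ) * pds (pds g k) k x + ((pds f k x : ℝ) : ℂ) * pds g k x)
          + (((pds f k x : ℝ) : ℂ) * pds g k x + ((pds (pds f k) k x : ℝ) : ℂ) * g x) := by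
    intro k
    rw [pds_add (diffOf (contDiff_prodRC hf (contDiff_pds hg k)) x)
        (diffOf (contDiff_prodRC (contDiff_pds hf k) hg) x) k,
      pds_prodRC (diffOf hf x) (diffOf (contDiff_pds hg k) x) k,
      pds_prodRC (diffOf (contDiff_pds hf k) x) (diffOf hg x) k]
  rw [Finset.sum_congr rfl fun k _ => e2 k]
  simp only [laps, Finset.sum_add_distrib, Complex.ofReal_sum, Finset.sum_mul, Finset.mul_sum]
  have e3 : ∑ j : Fin d, 2 * (((pds f j x : ℝ) : ℂ) * pds g j x)
      = (∑ j : Fin d, ((pds f j x : ℝ) : ℂ) * pds g j x) * 2 := by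
    rw [Finset.sum_mul]; exact Finset.sum_congr rfl fun k _ => by ring
  rw [e3]; ring

lemma pds_laps_comm {f : (Fin d → ℝ) → E} (hf : ContDiff ℝ (⊤:ℕ∞) f)
    (k : Fin d) (x : Fin d → ℝ) :
    pds (laps f) k x = laps (pds f k) x := by
  have e : laps f = fun y => ∑ j : Fin d, pds (pds f j) j y := rfl
  rw [e, pds_sum (fun j _ => diffOf (contDiff_pds (contDiff_pds hf j) j) x) k]
  refine Finset.sum_congr rfl fun j _ => ?_
  rw [pds_comm (contDiff_pds hf j) j k x]
  have e2 : pds (pds f j) k = pds (pds f k) j := by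
    funext y; exact pds_comm hf j k y
  rw [e2]

lemma pds_zero_fun {x : Fin d → ℝ} (k : Fin d) :
    pds (fun _ : Fin d → ℝ => (0 : E)) k x = 0 := by
  simp [pds]

lemma laps_zero_fun (x : Fin d → ℝ) :
    laps (fun _ : Fin d → ℝ => (0 : E)) x = 0 := by
  have e : ∀ k : Fin d, pds (fun _ : Fin d → ℝ => (0 : E)) k = fun _ => 0 := by
    intro k; funext y; exact pds_zero_fun k
  simp [laps, e, pds_zero_fun]

end helpers

/-- For smooth `S : ℝ^d → ℝ` and `A : ℝ^d → ℂ`, the commutator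
`[N₁,N₂](S,A) = DN₁(S,A)·N₂(S,A) − DN₂(S,A)·N₁(S,A)` equals, at every point,
`(0, (i(ε−1)/2)(∇ΔS·∇A + (A/2)Δ²S + 2Σₖ∇(∂ₖS)·∇(∂ₖA) + ∇A·∇ΔS))`. -/
theorem commutator_N1_N2
    (d : ℕ) (hd : 1 ≤ d) (ε : ℝ)
    (S : (Fin d → ℝ) → ℝ) (A : (Fin d → ℝ) → ℂ)
    (hS : ContDiff ℝ (⊤ : ℕ∞) S) (hA : ContDiff ℝ (⊤ : ℕ∞) A) :
    ∀ x : Fin d → ℝ,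
      (opDN1S S (fun _ => 0) x - 0 = 0)
      ∧ (opDN1A S A (fun _ => 0) (opN2A ε A) x - opDN2A ε (opN1A S A) x
          = Complex.I * ((ε : ℂ) - 1) / 2 *
            ((∑ k : Fin d, ((pds (laps S) k x : ℝ) : ℂ) * pds A k x)
              + A x / 2 * ((laps (laps S) x : ℝ) : ℂ)
              + 2 * (∑ k : Fin d, ∑ j : Fin d,
                  ((pds (pds S k) j x : ℝ) : ℂ) * pds (pds A k) j x)
              + ∑ k : Fin d, pds A k x * ((pds (laps S) k x : ℝ) : ℂ))) := by
  intro x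
  constructor
  · simp [opDN1S, pds_zero_fun]
  · have hLA := contDiff_laps hA
    have hLS := contDiff_laps hS
    have hN2fun : opN2A ε A = fun y => Complex.I * ((ε : ℂ) - 1) / 2 * laps A y := rfl
    have hN2x : opN2A ε A x = Complex.I * ((ε : ℂ) - 1) / 2 * laps A x := rfl
    have h1 : ∀ k : Fin d, pds (opN2A ε A) k x
        = Complex.I * ((ε : ℂ) - 1) / 2 * pds (laps A) k x := by
      intro k; rw [hN2fun]; exact pds_const_mul (diffOf hLA x) _ k
    have h2 : laps (opN2A ε A) x = Complex.I * ((ε : ℂ) - 1) / 2 * laps (laps A) x := by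
      rw [hN2fun]; exact laps_const_mul hLA _ x
    have hF1 : ContDiff ℝ (⊤:ℕ∞) (fun y => ∑ k : Fin d, ((pds S k y : ℝ):ℂ) * pds A k y) :=
      ContDiff.sum fun k _ => contDiff_prodRC (contDiff_pds hS k) (contDiff_pds hA k)
    have hG2 : ContDiff ℝ (⊤:ℕ∞) (fun y => (1/2:ℂ) * A y) := contDiff_const.mul hA
    have eF2 : (fun y => A y / 2 * ((laps S y : ℝ):ℂ))
        = fun y => ((laps S y : ℝ):ℂ) * ((1/2:ℂ) * A y) := by
      funext y; ring
    have hF2 : ContDiff ℝ (⊤:ℕ∞) (fun y => A y / 2 * ((laps S y : ℝ):ℂ)) := by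
      rw [eF2]; exact contDiff_prodRC hLS hG2
    have hF12 : ContDiff ℝ (⊤:ℕ∞) (fun y =>
        -(∑ k : Fin d, ((pds S k y:ℝ):ℂ) * pds A k y) - A y / 2 * ((laps S y:ℝ):ℂ)) :=
      (hF1.neg).sub hF2
    have hF3 : ContDiff ℝ (⊤:ℕ∞) (fun y => Complex.I / 2 * laps A y) := contDiff_const.mul hLA
    have h3 : laps (opN1A S A) x
        = -(laps (fun y => ∑ k : Fin d, ((pds S k y:ℝ):ℂ) * pds A k y) x)
          - laps (fun y => A y / 2 * ((laps S y:ℝ):ℂ)) x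
          + Complex.I / 2 * laps (laps A) x := by
      have e : opN1A S A = fun y =>
          (-(∑ k : Fin d, ((pds S k y:ℝ):ℂ) * pds A k y) - A y / 2 * ((laps S y:ℝ):ℂ))
          + Complex.I / 2 * laps A y := rfl
      rw [e, laps_add hF12 hF3 x, laps_sub hF1.neg hF2 x, laps_neg,
        laps_const_mul hLA _ x]
    have h4 : laps (fun y => ∑ k : Fin d, ((pds S k y:ℝ):ℂ) * pds A k y) x
        = (∑ k : Fin d, ((pds (laps S) k x:ℝ):ℂ) * pds A k x)
          + 2 * (∑ k : Fin d, ∑ j : Fin d, ((pds (pds S k) j x:ℝ):ℂ) * pds (pds A k) j x)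
          + ∑ k : Fin d, ((pds S k x:ℝ):ℂ) * pds (laps A) k x := by
      rw [laps_sum (fun k _ => contDiff_prodRC (contDiff_pds hS k) (contDiff_pds hA k)) x]
      have e : ∀ k : Fin d, laps (fun y => ((pds S k y:ℝ):ℂ) * pds A k y) x
          = ((pds (laps S) k x:ℝ):ℂ) * pds A k x
            + 2 * (∑ j : Fin d, ((pds (pds S k) j x:ℝ):ℂ) * pds (pds A k) j x)
            + ((pds S k x:ℝ):ℂ) * pds (laps A) k x := by
        intro k
        rw [laps_prodRC (contDiff_pds hS k) (contDiff_pds hA k) x,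
          pds_laps_comm hS k x, pds_laps_comm hA k x]
      rw [Finset.sum_congr rfl fun k _ => e k, Finset.sum_add_distrib,
        Finset.sum_add_distrib, ← Finset.mul_sum]
    have e2 : ∀ j : Fin d, pds (fun y => (1/2:ℂ) * A y) j x = (1/2:ℂ) * pds A j x :=
      fun j => pds_const_mul (diffOf hA x) _ j
    have h5 : laps (fun y => A y / 2 * ((laps S y:ℝ):ℂ)) x
        = ((laps (laps S) x:ℝ):ℂ) * ((1/2:ℂ) * A x)
          + 2 * (∑ j : Fin d, ((pds (laps S) j x:ℝ):ℂ) * ((1/2:ℂ) * pds A j x))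
          + ((laps S x:ℝ):ℂ) * ((1/2:ℂ) * laps A x) := by
      rw [eF2, laps_prodRC hLS hG2 x, laps_const_mul hA _ x,
        Finset.sum_congr rfl fun j _ => by rw [e2 j]]
    have hhalf : ∑ j : Fin d, ((pds (laps S) j x:ℝ):ℂ) * ((1/2:ℂ) * pds A j x)
        = (1/2:ℂ) * ∑ k : Fin d, ((pds (laps S) k x:ℝ):ℂ) * pds A k x := by
      rw [Finset.mul_sum]; exact Finset.sum_congr rfl fun j _ => by ring
    have hpull : ∑ k : Fin d, ((pds S k x:ℝ):ℂ)
          * (Complex.I * ((ε : ℂ) - 1) / 2 * pds (laps A) k x)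
        = Complex.I * ((ε : ℂ) - 1) / 2
          * ∑ k : Fin d, ((pds S k x:ℝ):ℂ) * pds (laps A) k x := by
      rw [Finset.mul_sum]; exact Finset.sum_congr rfl fun k _ => by ring
    have hP' : ∑ k : Fin d, pds A k x * ((pds (laps S) k x:ℝ):ℂ)
        = ∑ k : Fin d, ((pds (laps S) k x:ℝ):ℂ) * pds A k x :=
      Finset.sum_congr rfl fun k _ => mul_comm _ _
    simp only [opDN1A, opDN2A, pds_zero_fun, laps_zero_fun, Complex.ofReal_zero, zero_mul,
      mul_zero, Finset.sum_const_zero, sub_zero, neg_zero, add_zero]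
    simp only [h1]
    rw [hN2x, h2, h3, h4, h5, hpull, hhalf, hP']
    ring
end
end

section
/- Let E be a real Banach space, let f : E → E be Fréchet differentiable, let g : E → E be Fréchet differentiable, and let v ∈ E. Suppose φ : ℝ → E and Θ : ℝ → (E →L E) (continuous linear maps) satisfy: φ(0) = v, Θ(0) = id, φ'(h) = f(φ(h)) for all h, and for every w ∈ E the variational equation (d/dh)(Θ(h)·w) = Df(φ(h)) · (Θ(h)·w). Define χ(h) := Θ(h)·g(v) − g(φ(h)). Then χ(0) = 0 and, for every h, χ'(h) = Df(φ(h)) · χ(h) + [f,g](φ(h)), where the commutator is [f,g](u) := Df(u)·g(u) − Dg(u)·f(u). -/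
noncomputable section

/-- Let `φ` be the flow of the vector field `f` starting at `v` and let
`Θ` be the derivative of this flow with respect to the initial condition (solution of the
variational equation). Then the defect `χ(h) = Θ(h)·g(v) − g(φ(h))` satisfies `χ(0) = 0` and
the linear inhomogeneous equation `χ'(h) = Df(φ(h))·χ(h) + [f,g](φ(h))`, where
`[f,g](u) = Df(u)·g(u) − Dg(u)·f(u)`. -/
theorem defect_evolution_equation
    {E : Type*} [NormedAddCommGroup E] [NormedSpace ℝ E] [CompleteSpace E]
    (f g : E → E) (hf : Differentiable ℝ f) (hg : Differentiable ℝ g)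
    (v : E) (φ : ℝ → E) (Θ : ℝ → (E →L[ℝ] E))
    (hφ0 : φ 0 = v)
    (hΘ0 : Θ 0 = ContinuousLinearMap.id ℝ E)
    (hφ : ∀ h : ℝ, HasDerivAt φ (f (φ h)) h)
    (hΘ : ∀ (w : E) (h : ℝ),
      HasDerivAt (fun s => Θ s w) (fderiv ℝ f (φ h) (Θ h w)) h) :
    (Θ 0 (g v) - g (φ 0) = 0)
    ∧ ∀ h : ℝ,
        HasDerivAt (fun s => Θ s (g v) - g (φ s))
          (fderiv ℝ f (φ h) (Θ h (g v) - g (φ h))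
            + (fderiv ℝ f (φ h) (g (φ h)) - fderiv ℝ g (φ h) (f (φ h)))) h := by
  constructor
  · simp [hΘ0, hφ0]
  · intro h
    have h1 := hΘ (g v) h
    have h2 : HasDerivAt (fun s => g (φ s)) (fderiv ℝ g (φ h) (f (φ h))) h :=
      ((hg (φ h)).hasFDerivAt.comp_hasDerivAt h (hφ h))
    have := h1.sub h2
    convert this using 1
    · rfl
    rw [map_sub]
    abel
end
end

section
/- Let a > 0, b > 0, M ≥ 0, and let T > 0 satisfy T√(ab) + arctan(M √(b/a)) < π/2. Let y : [0, T] → ℝ be continuous on [0, T], differentiable on [0, T), and satisfy y(0) ≤ M and y'(t) ≤ a + b · y(t)² for all t ∈ [0, T). Then for all t ∈ [0, T], y(t) ≤ √(a/b) · tan( t√(ab) + arctan( M √(b/a) ) ). -/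
open Real

/-- Comparison bound for the differential inequality `y' ≤ a + b y²`,
whose equality case is solved by the tangent function: if `y(0) ≤ M` and
`T√(ab) + arctan(M√(b/a)) < π/2`, then
`y(t) ≤ √(a/b) tan(t√(ab) + arctan(M√(b/a)))` on `[0, T]`. -/
theorem riccati_tangent_comparison
    (a b M T : ℝ) (ha : 0 < a) (hb : 0 < b) (hM : 0 ≤ M) (hT0 : 0 < T)
    (hT : T * Real.sqrt (a * b) + Real.arctan (M * Real.sqrt (b / a)) < π / 2)
    (y y' : ℝ → ℝ)
    (hcont : ContinuousOn y (Set.Icc 0 T))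
    (hderiv : ∀ t ∈ Set.Ico 0 T, HasDerivWithinAt y (y' t) (Set.Icc 0 T) t)
    (hy0 : y 0 ≤ M)
    (hbound : ∀ t ∈ Set.Ico 0 T, y' t ≤ a + b * (y t) ^ 2) :
    ∀ t ∈ Set.Icc 0 T,
      y t ≤ Real.sqrt (a / b) *
        Real.tan (t * Real.sqrt (a * b) + Real.arctan (M * Real.sqrt (b / a))) := by
  set s : ℝ := Real.sqrt (a * b) with hs_def
  set c : ℝ := Real.arctan (M * Real.sqrt (b / a)) with hc_def
  set k : ℝ := Real.sqrt (a / b) with hk_def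
  have hs : 0 < s := Real.sqrt_pos.2 (mul_pos ha hb)
  have hk : 0 < k := Real.sqrt_pos.2 (div_pos ha hb)
  have hc0 : 0 ≤ c := by
    have : (0:ℝ) ≤ M * Real.sqrt (b / a) := mul_nonneg hM (Real.sqrt_nonneg _)
    rw [hc_def, ← Real.arctan_zero]
    exact Real.arctan_strictMono.monotone this
  have hks : k * s = a := by
    rw [hk_def, hs_def, ← Real.sqrt_mul (div_nonneg ha.le hb.le)]
    rw [div_mul_eq_mul_div, mul_comm a b, mul_div_assoc, mul_div_cancel_left₀ _ hb.ne',
      Real.sqrt_mul_self ha.le]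
  have hk2 : k ^ 2 = a / b := Real.sq_sqrt (div_nonneg ha.le hb.le)
  have hkM : k * (M * Real.sqrt (b / a)) = M := by
    rw [mul_comm M, ← mul_assoc, hk_def, ← Real.sqrt_mul (div_nonneg ha.le hb.le),
      div_mul_div_comm, mul_comm a b, div_self (mul_pos hb ha).ne', Real.sqrt_one, one_mul]
  -- key: comparison with the perturbed barrier for every small ε > 0
  have key : ∀ ε : ℝ, 0 < ε → T * (s + ε) + c < π / 2 →
      ∀ t ∈ Set.Icc 0 T, y t ≤ k * Real.tan (t * (s + ε) + c) := by
    intro ε hε hεT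
    have hsε : 0 < s + ε := by linarith
    -- the argument stays in (-π/2, π/2) on [0, T]
    have harg : ∀ t ∈ Set.Icc (0:ℝ) T, -(π/2) < t * (s + ε) + c ∧ t * (s + ε) + c < π / 2 := by
      intro t ht
      constructor
      · have : 0 ≤ t * (s + ε) := mul_nonneg ht.1 hsε.le
        have := Real.pi_pos
        linarith
      · have : t * (s + ε) ≤ T * (s + ε) := by
          exact mul_le_mul_of_nonneg_right ht.2 hsε.le
        linarith
    have hcos : ∀ t ∈ Set.Icc (0:ℝ) T, Real.cos (t * (s + ε) + c) ≠ 0 := by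
      intro t ht
      exact (Real.cos_pos_of_mem_Ioo ⟨(harg t ht).1, (harg t ht).2⟩).ne'
    have hθ : ∀ t : ℝ, HasDerivAt (fun u : ℝ => u * (s + ε) + c) (s + ε) t := by
      intro t
      simpa using ((hasDerivAt_id t).mul_const (s + ε)).add_const c
    have hB' : ∀ t ∈ Set.Ico (0:ℝ) T,
        HasDerivWithinAt (fun u => k * Real.tan (u * (s + ε) + c))
          (k * ((s + ε) * (1 / Real.cos (t * (s + ε) + c) ^ 2))) (Set.Ici t) t := by
      intro t ht
      have h1 : HasDerivAt (fun u => Real.tan (u * (s + ε) + c))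
          (1 / Real.cos (t * (s + ε) + c) ^ 2 * (s + ε)) t :=
        by have := (Real.hasDerivAt_tan (hcos t ⟨ht.1, ht.2.le⟩)).comp t (hθ t); exact this
      have := (h1.const_mul k).hasDerivWithinAt (s := Set.Ici t)
      rw [show k * ((s + ε) * (1 / Real.cos (t * (s + ε) + c) ^ 2))
          = k * (1 / Real.cos (t * (s + ε) + c) ^ 2 * (s + ε)) by ring]
      exact this
    have hBc : ContinuousOn (fun u => k * Real.tan (u * (s + ε) + c)) (Set.Icc 0 T) := by
      apply ContinuousOn.mul continuousOn_const
      intro t ht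
      have h2 : ContinuousAt (fun u : ℝ => Real.tan (u * (s + ε) + c)) t :=
        ContinuousAt.comp (g := Real.tan) (Real.continuousAt_tan.2 (hcos t ht))
          ((hθ t).continuousAt)
      exact h2.continuousWithinAt
    have hB0 : y 0 ≤ k * Real.tan (0 * (s + ε) + c) := by
      rw [zero_mul, zero_add, hc_def, Real.tan_arctan, hkM]
      exact hy0
    refine image_le_of_deriv_right_lt_deriv_boundary' (f' := y') hcont
      (fun t ht => ?_) hB0 hBc hB' (fun t ht heq => ?_)
    · -- derivative within Ici t
      refine (hderiv t ht).mono_of_mem_nhdsWithin ?_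
      have : Set.Ici t ∩ Set.Iio T ⊆ Set.Icc 0 T := fun u hu =>
        ⟨le_trans ht.1 hu.1, le_of_lt hu.2⟩
      exact Filter.mem_of_superset
        (inter_mem_nhdsWithin _ (Iio_mem_nhds ht.2)) this
    · -- strict inequality at touching points
      have hcost := hcos t ⟨ht.1, ht.2.le⟩
      have hcos2 : 0 < Real.cos (t * (s + ε) + c) ^ 2 := by positivity
      have htan : 1 + Real.tan (t * (s + ε) + c) ^ 2
          = 1 / Real.cos (t * (s + ε) + c) ^ 2 := by
        rw [← Real.inv_one_add_tan_sq hcost, one_div, inv_inv]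
      have hq : 0 < 1 / Real.cos (t * (s + ε) + c) ^ 2 := by positivity
      calc y' t ≤ a + b * (y t) ^ 2 := hbound t ht
        _ = a * (1 + Real.tan (t * (s + ε) + c) ^ 2) := by
            rw [heq, mul_pow, hk2]
            field_simp
        _ = a * (1 / Real.cos (t * (s + ε) + c) ^ 2) := by rw [htan]
        _ < k * ((s + ε) * (1 / Real.cos (t * (s + ε) + c) ^ 2)) := by
            have hEq : k * ((s + ε) * (1 / Real.cos (t * (s + ε) + c) ^ 2))
                = a * (1 / Real.cos (t * (s + ε) + c) ^ 2)
                  + (k * ε) * (1 / Real.cos (t * (s + ε) + c) ^ 2) := by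
              rw [← hks]; ring
            nlinarith [mul_pos (mul_pos hk hε) hq]
  -- pass to the limit ε → 0⁺
  intro t ht
  have hcos0 : Real.cos (t * s + c) ≠ 0 := by
    have h1 : 0 ≤ t * s := mul_nonneg ht.1 hs.le
    have h2 : t * s ≤ T * s := mul_le_mul_of_nonneg_right ht.2 hs.le
    have := Real.pi_pos
    exact (Real.cos_pos_of_mem_Ioo ⟨by linarith, by linarith⟩).ne'
  have htend : Filter.Tendsto (fun ε : ℝ => k * Real.tan (t * (s + ε) + c))
      (nhdsWithin 0 (Set.Ioi 0)) (nhds (k * Real.tan (t * s + c))) := by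
    have hθ : Filter.Tendsto (fun ε : ℝ => t * (s + ε) + c) (nhds 0) (nhds (t * s + c)) := by
      have hcont2 : Continuous (fun ε : ℝ => t * (s + ε) + c) :=
        (continuous_const.mul (continuous_const.add continuous_id)).add continuous_const
      simpa using hcont2.tendsto 0
    exact (Filter.Tendsto.const_mul k
      ((Real.continuousAt_tan.2 hcos0).tendsto.comp hθ)).mono_left nhdsWithin_le_nhds
  refine ge_of_tendsto htend ?_
  have hδ : 0 < (π / 2 - (T * s + c)) / T := by
    apply div_pos _ hT0
    linarith
  filter_upwards [Ioo_mem_nhdsGT_of_mem (Set.left_mem_Ico.2 hδ)] with ε hε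
  have h2 : ε * T < π / 2 - (T * s + c) := (lt_div_iff₀ hT0).1 hε.2
  exact key ε hε.1 (by nlinarith) t ht
end
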